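/- arXiv:1901.07663 — 4 statements merged into one kernel-verified Lean document; each statement's English description precedes it below -/
import Mathlib

section
/- The ratio Θ(s+1) / (s^s · √s · e^{−s}) tends to √(2π)·(e − 1) as the integer s tends to infinity; that is, Θ(s+1) is asymptotic to √(2π)(e−1) · s^{s+1/2} e^{−s}. -/
/-- The theta splitting function: `Θ(1) = 0` and `Θ(s+1) = 1 + s·Θ(s)` for `s ≥ 1`. -/
def Theta : ℕ → ℕ
  | 0 => 0
  | 1 => 0
  | (s + 2) => 1 + (s + 1) * Theta (s + 1)

lemma theta_eq (s : ℕ) :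
    (Theta (s + 1) : ℝ) = ((Nat.factorial s) : ℝ) * ∑ k ∈ Finset.range s, (1 : ℝ) / (Nat.factorial (k+1)) := by
  induction s with
  | zero => simp [Theta]
  | succ n ih =>
    rw [show n + 1 + 1 = n + 2 from rfl, Theta]
    push_cast
    rw [ih, Finset.sum_range_succ]
    have h : ((Nat.factorial (n+1)) : ℝ) ≠ 0 := by positivity
    rw [Nat.factorial_succ]
    push_cast
    field_simp
    ring

open Filter Real in
theorem theta_asymptotic :
    Tendsto (fun s : ℕ =>
        (Theta (s + 1) : ℝ) / ((s : ℝ) ^ (s : ℕ) * Real.sqrt s * Real.exp (-(s : ℝ))))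
      atTop (nhds (Real.sqrt (2 * Real.pi) * (Real.exp 1 - 1))) := by
  have h1 : Tendsto (fun s : ℕ => ∑ k ∈ Finset.range s, (1 : ℝ) / (Nat.factorial (k+1))) atTop
      (nhds (Real.exp 1 - 1)) := by
    have hs : HasSum (fun n : ℕ => (1 : ℝ) ^ n / (Nat.factorial n)) (Real.exp 1) := by
      rw [Real.exp_eq_exp_ℝ]
      exact NormedSpace.expSeries_div_hasSum_exp (1 : ℝ)
    have := hs.tendsto_sum_nat
    have h2 : Tendsto (fun s : ℕ => ∑ k ∈ Finset.range (s + 1), (1 : ℝ) ^ k / (Nat.factorial k)) atTop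
        (nhds (Real.exp 1)) := this.comp (tendsto_add_atTop_nat 1)
    have h3 : ∀ s : ℕ, ∑ k ∈ Finset.range s, (1 : ℝ) / (Nat.factorial (k+1))
        = (∑ k ∈ Finset.range (s + 1), (1 : ℝ) ^ k / (Nat.factorial k)) - 1 := by
      intro s
      rw [Finset.sum_range_succ' (fun k => (1 : ℝ) ^ k / (Nat.factorial k)) s]
      simp
    simp only [h3]
    simpa using h2.sub_const 1
  have h2 : Tendsto (fun s : ℕ => ((Nat.factorial s) : ℝ) / ((s : ℝ) ^ s * Real.sqrt s * Real.exp (-(s : ℝ))))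
      atTop (nhds (Real.sqrt (2 * Real.pi))) := by
    have := Stirling.tendsto_stirlingSeq_sqrt_pi.mul_const (Real.sqrt 2)
    have heq : ∀ s : ℕ, Stirling.stirlingSeq s * Real.sqrt 2
        = ((Nat.factorial s) : ℝ) / ((s : ℝ) ^ s * Real.sqrt s * Real.exp (-(s : ℝ))) := by
      intro s
      rcases Nat.eq_zero_or_pos s with h | h
      · subst h; simp [Stirling.stirlingSeq]
      · have hs0 : (0 : ℝ) < s := by exact_mod_cast h
        rw [Stirling.stirlingSeq]
        rw [Real.sqrt_mul (by norm_num : (0:ℝ) ≤ 2)]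
        rw [div_pow, Real.exp_neg]
        have he : Real.exp (s : ℝ) = (Real.exp 1) ^ s := by
          rw [← Real.exp_nat_mul]; ring_nf
        rw [he]
        have h2 : Real.sqrt 2 ≠ 0 := by positivity
        have h3 : Real.sqrt s ≠ 0 := by positivity
        have h4 : (Real.exp 1 : ℝ) ^ s ≠ 0 := by positivity
        field_simp
      
    rw [show Real.sqrt (2 * Real.pi) = Real.sqrt Real.pi * Real.sqrt 2 by
      rw [mul_comm, Real.sqrt_mul Real.pi_pos.le]]
    simpa only [heq] using this
  have key : ∀ s : ℕ, (Theta (s + 1) : ℝ) / ((s : ℝ) ^ s * Real.sqrt s * Real.exp (-(s : ℝ)))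
      = (∑ k ∈ Finset.range s, (1 : ℝ) / (Nat.factorial (k+1)))
        * (((Nat.factorial s) : ℝ) / ((s : ℝ) ^ s * Real.sqrt s * Real.exp (-(s : ℝ)))) := by
    intro s
    rw [theta_eq]
    ring
  simp only [key]
  simpa [mul_comm] using h1.mul h2
end

section
/- The quantity (∑_{m=0}^{s-2} ∏_{j=0}^{m} (s − j)) / (s^s · √s · e^{−s}) tends to √(2π)·(e − 1) as the integer s tends to infinity. -/
open Filter Finset Nat

lemma exp_partial_sums :
    Tendsto (fun s : ℕ => ∑ n ∈ Finset.range s, (1 : ℝ) / n !) atTop (nhds (Real.exp 1)) := by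
  have h := (Real.summable_pow_div_factorial 1).hasSum.tendsto_sum_nat
  have ht : ∑' n : ℕ, (1 : ℝ) ^ n / n ! = Real.exp 1 := by
    rw [Real.exp_eq_exp_ℝ, NormedSpace.exp_eq_tsum_div]
  rw [ht] at h
  simpa using h

lemma key_eq (s : ℕ) (hs : 1 ≤ s) :
    (∑ m ∈ Finset.range (s - 1), ∏ j ∈ Finset.range (m + 1), ((s : ℝ) - j)) =
      (s ! : ℝ) * ((∑ n ∈ Finset.range s, (1 : ℝ) / n !) - 1) := by
  have h1 : ∀ m ∈ Finset.range (s - 1),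
      (∏ j ∈ Finset.range (m + 1), ((s : ℝ) - j)) = (s ! : ℝ) / ((s - 1 - m)! : ℝ) := by
    intro m hm
    rw [Finset.mem_range] at hm
    have hprod : (∏ j ∈ Finset.range (m + 1), ((s : ℝ) - j)) =
        ((s.descFactorial (m + 1) : ℕ) : ℝ) := by
      rw [Nat.descFactorial_eq_prod_range, Nat.cast_prod]
      refine Finset.prod_congr rfl fun j hj => ?_
      rw [Finset.mem_range] at hj
      rw [Nat.cast_sub (by omega)]
    rw [hprod]
    have hfact : (s - (m + 1))! * s.descFactorial (m + 1) = s ! :=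
      Nat.factorial_mul_descFactorial (by omega)
    have h2 : s - 1 - m = s - (m + 1) := by omega
    rw [h2, eq_div_iff (by positivity)]
    rw [← Nat.cast_mul, mul_comm, hfact]
  rw [Finset.sum_congr rfl h1]
  have h3 : (∑ m ∈ Finset.range (s - 1), (s ! : ℝ) / ((s - 1 - m)! : ℝ)) =
      ∑ m ∈ Finset.range (s - 1), (s ! : ℝ) / ((m + 1)! : ℝ) := by
    rw [← Finset.sum_range_reflect (fun k => (s ! : ℝ) / ((k + 1)! : ℝ)) (s - 1)]
    refine Finset.sum_congr rfl fun j hj => ?_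
    rw [Finset.mem_range] at hj
    have harg : s - 1 - 1 - j + 1 = s - 1 - j := by omega
    rw [harg]
  rw [h3]
  have h4 : (∑ n ∈ Finset.range s, (1 : ℝ) / n !) =
      (∑ m ∈ Finset.range (s - 1), (1 : ℝ) / ((m + 1)! : ℝ)) + 1 := by
    have : s = (s - 1) + 1 := by omega
    rw [this, Finset.sum_range_succ' (fun n => (1 : ℝ) / n !)]
    simp
  rw [h4]
  rw [add_sub_cancel_right, Finset.mul_sum]
  refine Finset.sum_congr rfl fun m _ => ?_
  field_simp

lemma stirling_eq (s : ℕ) (hs : 1 ≤ s) :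
    (s ! : ℝ) / ((s : ℝ) ^ (s : ℕ) * Real.sqrt s * Real.exp (-(s : ℝ))) =
      Real.sqrt 2 * Stirling.stirlingSeq s := by
  rw [Stirling.stirlingSeq]
  have hss : (0 : ℝ) < s := by exact_mod_cast hs
  have h1 : Real.sqrt (2 * s : ℝ) = Real.sqrt 2 * Real.sqrt s := Real.sqrt_mul (by norm_num) _
  have h2 : ((s : ℝ) / Real.exp 1) ^ (s : ℕ) = (s : ℝ) ^ (s : ℕ) * Real.exp (-(s : ℝ)) := by
    rw [div_pow, ← Real.exp_nat_mul, Real.exp_neg]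
    field_simp
  rw [h1, h2]
  have he : Real.exp (-(s : ℝ)) ≠ 0 := Real.exp_ne_zero _
  have hsq : Real.sqrt s ≠ 0 := by positivity
  have hsp : (s : ℝ) ^ (s : ℕ) ≠ 0 := by positivity
  have h2' : Real.sqrt 2 ≠ 0 := by positivity
  field_simp

open Filter in
theorem sum_prod_asymptotic :
    Tendsto (fun s : ℕ =>
        ((∑ m ∈ Finset.range (s - 1), ∏ j ∈ Finset.range (m + 1), ((s : ℝ) - j)) /
          ((s : ℝ) ^ (s : ℕ) * Real.sqrt s * Real.exp (-(s : ℝ)))))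
      atTop (nhds (Real.sqrt (2 * Real.pi) * (Real.exp 1 - 1))) := by
  have hA : Tendsto (fun s : ℕ => Real.sqrt 2 * Stirling.stirlingSeq s *
      ((∑ n ∈ Finset.range s, (1 : ℝ) / n !) - 1)) atTop
      (nhds (Real.sqrt 2 * Real.sqrt Real.pi * (Real.exp 1 - 1))) :=
    ((tendsto_const_nhds.mul Stirling.tendsto_stirlingSeq_sqrt_pi).mul
      (exp_partial_sums.sub tendsto_const_nhds))
  rw [← Real.sqrt_mul (by norm_num)] at hA
  refine hA.congr' ?_
  filter_upwards [eventually_ge_atTop 1] with s hs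
  rw [key_eq s hs, ← stirling_eq s hs]
  rw [div_eq_mul_inv, div_eq_mul_inv]
  ring
end

section
/- For every integer s ≥ 1, Θ(s+1) equals the floor of (e − 1)·s!, i.e., Θ(s+1) = ⌊(e − 1)·s!⌋. -/
open Finset in
lemma theta_eq_sum (s : ℕ) (hs : 1 ≤ s) :
    (Theta (s + 1) : ℝ) =
      (s.factorial : ℝ) * (∑ k ∈ range (s + 1), 1 / (k.factorial : ℝ)) - s.factorial := by
  induction s with
  | zero => omega
  | succ n ih =>
    rcases Nat.eq_or_lt_of_le hs with h | h
    · have hn0 : n = 0 := by omega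
      subst hn0
      show ((1 + 1 * Theta 1 : ℕ) : ℝ) = _
      simp [Theta, Finset.sum_range_succ]
    · have hn : 1 ≤ n := by omega
      have hfac : ((n+1).factorial : ℝ) = ((n:ℝ)+1) * n.factorial := by
        push_cast [Nat.factorial_succ]; ring
      have hf0 : (n.factorial : ℝ) ≠ 0 := by positivity
      show ((1 + (n + 1) * Theta (n + 1) : ℕ) : ℝ) = _
      rw [Finset.sum_range_succ, Nat.cast_add, Nat.cast_one, Nat.cast_mul, Nat.cast_add,
        Nat.cast_one, ih hn, hfac]
      field_simp
      ring

theorem theta_eq_floor (s : ℕ) (hs : 1 ≤ s) :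
    (Theta (s + 1) : ℤ) = ⌊(Real.exp 1 - 1) * s.factorial⌋ := by
  have key := theta_eq_sum s hs
  set S : ℝ := ∑ k ∈ Finset.range (s + 1), 1 / (k.factorial : ℝ) with hS
  have hfacpos : (0:ℝ) < (s.factorial : ℝ) := by positivity
  have hlow : (Theta (s+1) : ℝ) ≤ (Real.exp 1 - 1) * s.factorial := by
    have h1 : S ≤ Real.exp 1 := by
      have := Real.sum_le_exp_of_nonneg (x := 1) zero_le_one (s + 1)
      simpa [hS] using this
    rw [key]
    nlinarith
  have hupp : (Real.exp 1 - 1) * s.factorial < (Theta (s+1) : ℝ) + 1 := by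
    have hb := Real.exp_bound (x := 1) (by norm_num) (n := s + 1) (by omega)
    simp only [one_pow, abs_one, one_mul] at hb
    have h2 : Real.exp 1 - S ≤ ((s:ℝ)+2) / (((s+1).factorial : ℝ) * ((s:ℝ)+1)) := by
      have h := (abs_le.mp hb).2
      push_cast at h
      have he : ((s:ℝ)+1+1) = (s:ℝ)+2 := by ring
      rw [he] at h
      simpa [hS] using h
    have h3 : (s.factorial : ℝ) * (Real.exp 1 - S) < 1 := by
      have hfac : ((s+1).factorial : ℝ) = (s+1) * s.factorial := by
        push_cast [Nat.factorial_succ]; ring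
      have hq : (s.factorial : ℝ) * (((s:ℝ)+2) / (((s+1).factorial : ℝ) * ((s:ℝ)+1))) =
          ((s:ℝ)+2) / (((s:ℝ)+1) * ((s:ℝ)+1)) := by
        rw [hfac]; field_simp
      have hlt : ((s:ℝ)+2) / (((s:ℝ)+1) * ((s:ℝ)+1)) < 1 := by
        rw [div_lt_one (by positivity)]
        have : (1:ℝ) ≤ s := by exact_mod_cast hs
        nlinarith
      calc (s.factorial : ℝ) * (Real.exp 1 - S)
          ≤ (s.factorial : ℝ) * (((s:ℝ)+2) / (((s+1).factorial : ℝ) * ((s:ℝ)+1))) := by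
            apply mul_le_mul_of_nonneg_left h2 hfacpos.le
        _ < 1 := by rw [hq]; exact hlt
    rw [key]
    nlinarith
  rw [eq_comm, Int.floor_eq_iff]
  constructor
  · exact_mod_cast hlow
  · push_cast
    exact hupp
end

section
/- For every integer s ≥ 1, the approximation error satisfies 0 < (e − 1)·s! − Θ(s+1) < 1/s. -/
lemma theta_sum (s : ℕ) :
    (Theta (s + 1) : ℝ) + s.factorial = ∑ i ∈ Finset.range (s + 1), (s.factorial : ℝ) / i.factorial := by
  induction s with
  | zero => simp [Theta]
  | succ s ih =>
    rw [Finset.sum_range_succ]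
    have h1 : ((s+1).factorial : ℝ) / (s+1).factorial = 1 := by
      rw [div_self]; positivity
    have h2 : ∀ i ∈ Finset.range (s+1), ((s+1).factorial : ℝ) / i.factorial
        = (s+1) * ((s.factorial : ℝ) / i.factorial) := by
      intro i _
      rw [Nat.factorial_succ]
      push_cast
      ring
    rw [Finset.sum_congr rfl h2, ← Finset.mul_sum, ← ih, h1]
    show ((1 + (s+1) * Theta (s+1) : ℕ) : ℝ) + _ = _
    push_cast [Nat.factorial_succ]
    ring

theorem theta_error_bounds (s : ℕ) (hs : 1 ≤ s) :
    0 < (Real.exp 1 - 1) * s.factorial - (Theta (s + 1) : ℝ) ∧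
      (Real.exp 1 - 1) * s.factorial - (Theta (s + 1) : ℝ) < 1 / s := by
  have hfpos : (0:ℝ) < s.factorial := by exact_mod_cast s.factorial_pos
  have key : (Real.exp 1 - 1) * s.factorial - (Theta (s + 1) : ℝ)
      = s.factorial * (Real.exp 1 - ∑ i ∈ Finset.range (s + 1), (1:ℝ) / i.factorial) := by
    have := theta_sum s
    have hsum : (s.factorial : ℝ) * ∑ i ∈ Finset.range (s + 1), (1:ℝ) / i.factorial
        = ∑ i ∈ Finset.range (s + 1), (s.factorial : ℝ) / i.factorial := by
      rw [Finset.mul_sum]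
      exact Finset.sum_congr rfl fun i _ => by ring
    nlinarith [this, hsum]
  have hsum_eq : ∀ n : ℕ, ∑ i ∈ Finset.range n, (1:ℝ) / i.factorial
      = ∑ i ∈ Finset.range n, (1:ℝ) ^ i / i.factorial := by
    intro n; exact Finset.sum_congr rfl fun i _ => by rw [one_pow]
  constructor
  · rw [key]
    apply mul_pos hfpos
    rw [sub_pos]
    calc ∑ i ∈ Finset.range (s + 1), (1:ℝ) / i.factorial
        < ∑ i ∈ Finset.range (s + 2), (1:ℝ) / i.factorial := by
          rw [Finset.sum_range_succ (n := s+1)]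
          have : (0:ℝ) < 1 / (s+1).factorial := by positivity
          linarith
      _ ≤ Real.exp 1 := by
          rw [hsum_eq]
          exact Real.sum_le_exp_of_nonneg zero_le_one _
  · rw [key]
    have hb := Real.exp_bound (x := 1) (by norm_num) (n := s + 1) (Nat.succ_pos s)
    rw [← hsum_eq] at hb
    have htail : Real.exp 1 - ∑ i ∈ Finset.range (s + 1), (1:ℝ) / i.factorial
        ≤ ((s+1).succ : ℝ) / ((s+1).factorial * (s+1)) := by
      have h2 := (abs_le.mp hb).2
      simpa using h2
    have hs1 : (1:ℝ) ≤ s := by exact_mod_cast hs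
    have hfac : ((s+1).factorial : ℝ) = (s+1) * s.factorial := by
      rw [Nat.factorial_succ]; push_cast; ring
    calc (s.factorial : ℝ) * (Real.exp 1 - ∑ i ∈ Finset.range (s + 1), (1:ℝ) / i.factorial)
        ≤ s.factorial * (((s+1).succ : ℝ) / ((s+1).factorial * (s+1))) :=
          mul_le_mul_of_nonneg_left htail hfpos.le
      _ = (s + 2) / ((s+1)^2) := by
          push_cast [hfac]; field_simp; ring
      _ < 1 / s := by
          rw [div_lt_div_iff₀ (by positivity) (by linarith)]
          nlinarith
end
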